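/- Let x₀ > 0, q > 1, and let λ₀ be the smallest λ > 0 satisfying h_q(λ) = 1. If T > 0 satisfies T < 1/(λ₀ e^{x₀+1}) and T < −(1/λ₀) log( 1 − e^{−2q(x₀+1)} ), then the initial value problem x'(t) = e^{x(t)} on [0,T] with x(0) = x₀ has a classical solution x ∈ C¹([0,T], ℝ). -/

import Mathlib

/-- `h_q(λ) := λ e^{−λ/e} (√(4 + e^{−2λ/e}) − e^{−λ/e})^{1/q} / (2^{1/q}(1 − e^{−λ/e})^{1/(2q)})`. -/
noncomputable def hFun (q lam : ℝ) : ℝ :=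
  lam * Real.exp (-(lam / Real.exp 1)) *
    ((Real.sqrt (4 + Real.exp (-(2 * lam / Real.exp 1))) - Real.exp (-(lam / Real.exp 1))) ^ (1 / q)
      / ((2:ℝ) ^ (1 / q) * (1 - Real.exp (-(lam / Real.exp 1))) ^ (1 / (2 * q))))

lemma hFun_lt_one_of_small (q : ℝ) (hq : 1 < q) (lam : ℝ) (h0 : 0 < lam)
    (h1 : lam * Real.exp 1 ≤ 1) : hFun q lam < 1 := by
  have hq0 : (0:ℝ) < q := lt_trans one_pos hq
  have he1 : (0:ℝ) < Real.exp 1 := Real.exp_pos 1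
  set u := Real.exp (-(lam / Real.exp 1)) with hu_def
  have hu0 : 0 < u := Real.exp_pos _
  have hu1 : u < 1 := by
    rw [hu_def]
    apply Real.exp_lt_one_iff.mpr
    have : 0 < lam / Real.exp 1 := div_pos h0 he1
    linarith
  have hsq : Real.exp (-(2 * lam / Real.exp 1)) = u ^ 2 := by
    rw [hu_def, sq, ← Real.exp_add]
    ring_nf
  set A := Real.sqrt (4 + Real.exp (-(2 * lam / Real.exp 1))) - u with hA_def
  set B := 1 - u with hB_def
  have hB0 : 0 < B := by simp [hB_def]; linarith
  have hB1 : B < 1 := by simp [hB_def]; linarith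
  have hA0 : 0 < A := by
    rw [hA_def, hsq, sub_pos]
    have : u = Real.sqrt (u ^ 2) := by
      rw [Real.sqrt_sq hu0.le]
    rw [this]
    apply Real.sqrt_lt_sqrt (by positivity)
    nlinarith [Real.sq_sqrt (show (0:ℝ) ≤ u^2 by positivity)]
  have hA2 : A < 2 := by
    rw [hA_def, hsq, sub_lt_iff_lt_add]
    have h24 : Real.sqrt (4 + u ^ 2) < 2 + u := by
      rw [show (2:ℝ) + u = Real.sqrt ((2+u)^2) by rw [Real.sqrt_sq (by linarith)]]
      apply Real.sqrt_lt_sqrt (by positivity)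
      nlinarith
    linarith
  -- key bound : lam * u ≤ B ^ (1/(2q))
  have hBlb : lam / Real.exp 1 * u ≤ B := by
    have := Real.add_one_le_exp (lam / Real.exp 1)
    have hmul : (lam / Real.exp 1 + 1) * u ≤ Real.exp (lam / Real.exp 1) * u :=
      mul_le_mul_of_nonneg_right this hu0.le
    have hexp : Real.exp (lam / Real.exp 1) * u = 1 := by
      rw [hu_def, ← Real.exp_add]; simp
    rw [hexp] at hmul
    rw [hB_def]
    nlinarith
  have hlamu1 : lam * u * Real.exp 1 ≤ 1 := by nlinarith
  have hsqB : lam * u ≤ Real.sqrt B := by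
    apply (Real.le_sqrt (by positivity) (by positivity)).mpr
    have : (lam * u) ^ 2 ≤ lam / Real.exp 1 * u := by
      rw [div_mul_eq_mul_div, le_div_iff₀ he1]
      have hlu : (0:ℝ) < lam * u := mul_pos h0 hu0
      nlinarith [mul_le_mul_of_nonneg_left hlamu1 hlu.le]
    linarith
  have hsqrpow : Real.sqrt B = B ^ ((1:ℝ)/2) := Real.sqrt_eq_rpow B
  have hexpo : (1:ℝ) / (2*q) ≤ 1/2 := by
    rw [div_le_div_iff₀ (by positivity) (by norm_num)]
    linarith
  have hBpow : B ^ ((1:ℝ)/2) ≤ B ^ ((1:ℝ)/(2*q)) :=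
    Real.rpow_le_rpow_of_exponent_ge hB0 hB1.le hexpo
  have hkey : lam * u ≤ B ^ ((1:ℝ)/(2*q)) := by
    calc lam * u ≤ Real.sqrt B := hsqB
    _ = B ^ ((1:ℝ)/2) := hsqrpow
    _ ≤ B ^ ((1:ℝ)/(2*q)) := hBpow
  have hApow : A ^ ((1:ℝ)/q) < (2:ℝ) ^ ((1:ℝ)/q) :=
    Real.rpow_lt_rpow hA0.le hA2 (by positivity)
  have hApow0 : 0 < A ^ ((1:ℝ)/q) := Real.rpow_pos_of_pos hA0 _
  have h2pow0 : (0:ℝ) < (2:ℝ) ^ ((1:ℝ)/q) := Real.rpow_pos_of_pos (by norm_num) _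
  have hBpow0 : (0:ℝ) < B ^ ((1:ℝ)/(2*q)) := Real.rpow_pos_of_pos hB0 _
  have : hFun q lam = lam * u * A ^ ((1:ℝ)/q) / ((2:ℝ) ^ ((1:ℝ)/q) * B ^ ((1:ℝ)/(2*q))) := by
    rw [hFun]
    ring
  rw [this, div_lt_one (by positivity)]
  calc lam * u * A ^ ((1:ℝ)/q) < lam * u * (2:ℝ) ^ ((1:ℝ)/q) := by
        apply mul_lt_mul_of_pos_left hApow (by positivity)
  _ ≤ B ^ ((1:ℝ)/(2*q)) * (2:ℝ) ^ ((1:ℝ)/q) := mul_le_mul_of_nonneg_right hkey h2pow0.le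
  _ = (2:ℝ) ^ ((1:ℝ)/q) * B ^ ((1:ℝ)/(2*q)) := by ring

/-- Exponential nonlinearity: with `λ₀` the smallest positive root of
`h_q(λ) = 1`, if `T < 1/(λ₀ e^{x₀+1})` and `T < −(1/λ₀) log(1 − e^{−2q(x₀+1)})`, then
`x' = e^x`, `x(0) = x₀` has a classical solution on `[0,T]`. -/
theorem stmt_16 (x₀ : ℝ) (hx : 0 < x₀) (q : ℝ) (hq : 1 < q)
    (lam0 : ℝ) (hlam0 : IsLeast {lam : ℝ | 0 < lam ∧ hFun q lam = 1} lam0)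
    (T : ℝ) (hT : 0 < T)
    (hT1 : T < 1 / (lam0 * Real.exp (x₀ + 1)))
    (hT2 : T < -(1 / lam0) * Real.log (1 - Real.exp (-(2 * q * (x₀ + 1))))) :
    ∃ x : ℝ → ℝ, ContDiffOn ℝ 1 x (Set.Icc 0 T) ∧ x 0 = x₀ ∧
      ∀ t ∈ Set.Icc (0:ℝ) T, HasDerivWithinAt x (Real.exp (x t)) (Set.Icc 0 T) t := by
  obtain ⟨⟨hl0, hl1⟩, _⟩ := hlam0
  have he1 : (0:ℝ) < Real.exp 1 := Real.exp_pos 1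
  have hE : (0:ℝ) < Real.exp x₀ := Real.exp_pos _
  -- λ₀ e > 1
  have hkey : 1 < lam0 * Real.exp 1 := by
    by_contra h
    push_neg at h
    have := hFun_lt_one_of_small q hq lam0 hl0 h
    rw [hl1] at this
    exact lt_irrefl 1 this
  -- T e^{x₀} < 1
  have hTE : T * Real.exp x₀ < 1 := by
    have hden : 0 < lam0 * Real.exp (x₀ + 1) := by positivity
    rw [lt_div_iff₀ hden] at hT1
    have hsplit : Real.exp (x₀ + 1) = Real.exp x₀ * Real.exp 1 := Real.exp_add _ _
    rw [hsplit] at hT1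
    nlinarith
  set E := Real.exp x₀ with hE_def
  set x : ℝ → ℝ := fun t => x₀ - Real.log (1 - t * E) with hx_def
  have hpos : ∀ t ∈ Set.Icc (0:ℝ) T, 0 < 1 - t * E := by
    intro t ht
    obtain ⟨ht1, ht2⟩ := ht
    nlinarith
  refine ⟨x, ?_, ?_, ?_⟩
  · intro t ht
    have hinner : ContDiffAt ℝ 1 (fun s : ℝ => 1 - s * E) t :=
      (contDiffAt_const.sub (contDiffAt_id.mul contDiffAt_const))
    have hlog : ContDiffAt ℝ 1 (fun s : ℝ => Real.log (1 - s * E)) t :=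
      by have h := ((Real.contDiffAt_log (n := 1) (x := 1 - t * E)).mpr (ne_of_gt (hpos t ht))).comp t hinner; exact h
    exact (contDiffAt_const.sub hlog).contDiffWithinAt
  · simp [hx_def]
  · intro t ht
    have hd : HasDerivAt (fun s : ℝ => 1 - s * E) (-E) t := by
      simpa using ((hasDerivAt_id t).mul_const E).const_sub 1
    have hlog : HasDerivAt (fun s : ℝ => Real.log (1 - s * E)) (-E / (1 - t * E)) t :=
      hd.log (ne_of_gt (hpos t ht))
    have hxd : HasDerivAt x (E / (1 - t * E)) t := by
      have := hlog.const_sub x₀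
      simpa [neg_div, hx_def] using this
    have hval : Real.exp (x t) = E / (1 - t * E) := by
      rw [hx_def]
      simp only
      rw [Real.exp_sub, Real.exp_log (hpos t ht)]
    rw [hval]
    exact hxd.hasDerivWithinAt
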